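/- Every simple signed corona graph (G,σ) is self-invertible: its adjacency matrix A is invertible, A⁻¹ is the adjacency matrix of a signed graph (G⁻¹,σ⁻¹), and G⁻¹ is isomorphic to G via the map swapping each degree-1 vertex u_i with its neighbor v_i. -/

import Mathlib

open scoped Classical

/-- The corona of a graph `H` on `Fin n`: each vertex `inl i` (a vertex `v_i` of `H`)
gets a new pendant neighbor `inr i` (the vertex `u_i`). -/
def corona {n : ℕ} (H : SimpleGraph (Fin n)) : SimpleGraph (Fin n ⊕ Fin n) where
  Adj x y :=
    match x, y with
    | .inl i, .inl j => H.Adj i j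
    | .inl i, .inr j => i = j
    | .inr i, .inl j => i = j
    | .inr _, .inr _ => False
  symm := by
    constructor
    rintro (i | i) (j | j) h
    · exact H.adj_symm h
    · exact h.symm
    · exact h.symm
    · exact h.elim
  loopless := by
    constructor
    rintro (i | i) h
    · exact H.irrefl h
    · exact h.elim

lemma corona_adj_ll {n : ℕ} (H : SimpleGraph (Fin n)) (i j : Fin n) :
    (corona H).Adj (Sum.inl i) (Sum.inl j) ↔ H.Adj i j := Iff.rfl

lemma corona_adj_lr {n : ℕ} (H : SimpleGraph (Fin n)) (i j : Fin n) :
    (corona H).Adj (Sum.inl i) (Sum.inr j) ↔ i = j := Iff.rfl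

lemma corona_adj_rl {n : ℕ} (H : SimpleGraph (Fin n)) (i j : Fin n) :
    (corona H).Adj (Sum.inr i) (Sum.inl j) ↔ i = j := Iff.rfl

lemma corona_adj_rr {n : ℕ} (H : SimpleGraph (Fin n)) (i j : Fin n) :
    ¬ (corona H).Adj (Sum.inr i) (Sum.inr j) := fun h => h

/-- Every simple signed corona graph `(G,σ)` is self-invertible: its
adjacency matrix `A` is invertible, `A⁻¹` is the adjacency matrix of a signed graph
`(G⁻¹,σ⁻¹)` with `σ⁻¹(u_iv_i) = σ(u_iv_i)`,
`σ⁻¹(u_iu_j) = −σ(u_iv_i)σ(v_iv_j)σ(v_ju_j)` for `v_iv_j ∈ E(H)`, and `σ⁻¹ = 0`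
otherwise, and `G⁻¹` is isomorphic to `G` via the map swapping each pendant vertex
`u_i` with its neighbor `v_i`. -/
theorem signed_corona_self_invertible
    {n : ℕ} (H : SimpleGraph (Fin n))
    (σ : (Fin n ⊕ Fin n) → (Fin n ⊕ Fin n) → ℝ)
    (hσsymm : ∀ x y, σ x y = σ y x)
    (hσval : ∀ x y, (corona H).Adj x y → σ x y = 1 ∨ σ x y = -1)
    (A : Matrix (Fin n ⊕ Fin n) (Fin n ⊕ Fin n) ℝ)
    (hAdef : A = Matrix.of fun x y => if (corona H).Adj x y then σ x y else 0) :
    A.det ≠ 0 ∧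
    (∀ i j, A⁻¹ (Sum.inl i) (Sum.inl j) = 0) ∧
    (∀ i j, A⁻¹ (Sum.inl i) (Sum.inr j) =
      if i = j then σ (Sum.inl i) (Sum.inr i) else 0) ∧
    (∀ i j, A⁻¹ (Sum.inr i) (Sum.inr j) =
      if H.Adj i j then
        -(σ (Sum.inr i) (Sum.inl i) * σ (Sum.inl i) (Sum.inl j) *
          σ (Sum.inl j) (Sum.inr j))
      else 0) ∧
    (∀ x y, A⁻¹ (Sum.elim Sum.inr Sum.inl x) (Sum.elim Sum.inr Sum.inl y) ≠ 0 ↔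
      (corona H).Adj x y) := by
  have hs : ∀ i : Fin n, σ (Sum.inl i) (Sum.inr i) = 1 ∨ σ (Sum.inl i) (Sum.inr i) = -1 :=
    fun i => hσval _ _ rfl
  have hs2 : ∀ i : Fin n, σ (Sum.inl i) (Sum.inr i) * σ (Sum.inl i) (Sum.inr i) = 1 := by
    intro i; rcases hs i with h | h <;> rw [h] <;> ring
  have hsne : ∀ i : Fin n, σ (Sum.inl i) (Sum.inr i) ≠ 0 := by
    intro i; rcases hs i with h | h <;> rw [h] <;> norm_num
  set B : Matrix (Fin n ⊕ Fin n) (Fin n ⊕ Fin n) ℝ := Matrix.of fun x y =>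
    match x, y with
    | .inl _, .inl _ => (0 : ℝ)
    | .inl i, .inr j => if i = j then σ (Sum.inl i) (Sum.inr i) else 0
    | .inr i, .inl j => if i = j then σ (Sum.inl i) (Sum.inr i) else 0
    | .inr i, .inr j => if H.Adj i j then
        -(σ (Sum.inr i) (Sum.inl i) * σ (Sum.inl i) (Sum.inl j) *
          σ (Sum.inl j) (Sum.inr j))
      else 0
    with hB
  have hAB : A * B = 1 := by
    ext x y
    rw [Matrix.mul_apply, Fintype.sum_sum_type]
    rcases x with i | i <;> rcases y with j | j
    · -- (inl i, inl j)
      have S1 : ∑ k, A (Sum.inl i) (Sum.inl k) * B (Sum.inl k) (Sum.inl j) = 0 :=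
        Finset.sum_eq_zero (fun k _ => by simp [hB])
      have S2 : ∑ k, A (Sum.inl i) (Sum.inr k) * B (Sum.inr k) (Sum.inl j)
          = A (Sum.inl i) (Sum.inr i) * B (Sum.inr i) (Sum.inl j) :=
        Finset.sum_eq_single_of_mem i (Finset.mem_univ i)
          (fun k _ hk => by simp [hAdef, corona_adj_lr, Ne.symm hk])
      rw [S1, S2, hAdef, hB]
      simp only [Matrix.of_apply, corona_adj_lr, Matrix.one_apply, zero_add, if_pos rfl]
      by_cases hij : i = j
      · subst hij; simp [hs2 i]
      · simp [hij]
    · -- (inl i, inr j)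
      have S1 : ∑ k, A (Sum.inl i) (Sum.inl k) * B (Sum.inl k) (Sum.inr j)
          = A (Sum.inl i) (Sum.inl j) * B (Sum.inl j) (Sum.inr j) :=
        Finset.sum_eq_single_of_mem j (Finset.mem_univ j)
          (fun k _ hk => by simp [hB, hk])
      have S2 : ∑ k, A (Sum.inl i) (Sum.inr k) * B (Sum.inr k) (Sum.inr j)
          = A (Sum.inl i) (Sum.inr i) * B (Sum.inr i) (Sum.inr j) :=
        Finset.sum_eq_single_of_mem i (Finset.mem_univ i)
          (fun k _ hk => by simp [hAdef, corona_adj_lr, Ne.symm hk])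
      rw [S1, S2, hAdef, hB]
      have hne : ¬ ((Sum.inl i : Fin n ⊕ Fin n) = Sum.inr j) := by simp
      simp only [Matrix.of_apply, corona_adj_ll, corona_adj_lr, Matrix.one_apply,
        if_pos rfl, if_neg hne]
      by_cases hij : H.Adj i j
      · have hsym : σ (Sum.inr i) (Sum.inl i) = σ (Sum.inl i) (Sum.inr i) := hσsymm _ _
        simp only [if_pos hij, hsym]
        rcases hs i with h | h <;> rw [h] <;> simp only [if_true] <;> ring
      · simp [hij]
    · -- (inr i, inl j)
      have S1 : ∑ k, A (Sum.inr i) (Sum.inl k) * B (Sum.inl k) (Sum.inl j) = 0 :=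
        Finset.sum_eq_zero (fun k _ => by simp [hB])
      have S2 : ∑ k, A (Sum.inr i) (Sum.inr k) * B (Sum.inr k) (Sum.inl j) = 0 :=
        Finset.sum_eq_zero (fun k _ => by
          simp [hAdef, corona_adj_rr])
      rw [S1, S2]
      have hne : ¬ ((Sum.inr i : Fin n ⊕ Fin n) = Sum.inl j) := by simp
      simp [Matrix.one_apply, hne]
    · -- (inr i, inr j)
      have S1 : ∑ k, A (Sum.inr i) (Sum.inl k) * B (Sum.inl k) (Sum.inr j)
          = A (Sum.inr i) (Sum.inl i) * B (Sum.inl i) (Sum.inr j) :=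
        Finset.sum_eq_single_of_mem i (Finset.mem_univ i)
          (fun k _ hk => by simp [hAdef, corona_adj_rl, Ne.symm hk])
      have S2 : ∑ k, A (Sum.inr i) (Sum.inr k) * B (Sum.inr k) (Sum.inr j) = 0 :=
        Finset.sum_eq_zero (fun k _ => by simp [hAdef, corona_adj_rr])
      rw [S1, S2, hAdef, hB]
      have hsym : σ (Sum.inr i) (Sum.inl i) = σ (Sum.inl i) (Sum.inr i) := hσsymm _ _
      simp only [Matrix.of_apply, corona_adj_rl, Matrix.one_apply, add_zero,
        if_pos rfl, hsym]
      by_cases hij : i = j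
      · subst hij; simp [hs2 i]
      · have : ¬ ((Sum.inr i : Fin n ⊕ Fin n) = Sum.inr j) := by simp [hij]
        simp [hij, this]
  have hdet : A.det ≠ 0 := by
    have h1 : A.det * B.det = 1 := by rw [← Matrix.det_mul, hAB, Matrix.det_one]
    intro h
    rw [h, zero_mul] at h1
    exact zero_ne_one h1
  have hinv : A⁻¹ = B := Matrix.inv_eq_right_inv hAB
  refine ⟨hdet, ?_, ?_, ?_, ?_⟩
  · intro i j; rw [hinv]; rfl
  · intro i j; rw [hinv]; rfl
  · intro i j; rw [hinv]; rfl
  · rintro (i | i) (j | j)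
    · -- entry A⁻¹ (inr i) (inr j), Adj inl inl = H.Adj i j
      rw [hinv]
      simp only [Sum.elim_inl, hB, Matrix.of_apply, corona_adj_ll]
      constructor
      · intro h
        by_contra hadj
        simp [hadj] at h
      · intro hadj
        have h1 := hσval _ _ ((corona_adj_rl H i i).2 rfl)
        have h2 := hσval _ _ ((corona_adj_ll H i j).2 hadj)
        have h3 := hσval _ _ ((corona_adj_lr H j j).2 rfl)
        simp only [if_pos hadj]
        rcases h1 with a | a <;> rcases h2 with b | b <;> rcases h3 with c | c <;>
          rw [a, b, c] <;> norm_num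
    · -- entry A⁻¹ (inr i) (inl j), Adj = i = j
      rw [hinv]
      simp only [Sum.elim_inl, Sum.elim_inr, hB, Matrix.of_apply, corona_adj_lr]
      constructor
      · intro h
        by_contra hij
        simp [hij] at h
      · intro hij
        subst hij
        simp [hsne i]
    · -- entry A⁻¹ (inl i) (inr j), Adj = i = j
      rw [hinv]
      simp only [Sum.elim_inl, Sum.elim_inr, hB, Matrix.of_apply, corona_adj_rl]
      constructor
      · intro h
        by_contra hij
        simp [hij] at h
      · intro hij
        subst hij
        simp [hsne i]
    · -- entry A⁻¹ (inl i) (inl j) = 0, Adj = False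
      rw [hinv]
      simp [hB, corona_adj_rr]
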